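/- For every λ ∈ K^{d+1}, the linear map φ^λ : D ⊗ D → D ⊗ D defined on basis vectors by φ^λ(a ⊗ b) = Σ_{l ≤ min(a,b)} λ^l · binom(b,l) · (a − l) ⊗ (b − l) is tree-compatible (with both the edge-decoration space and the vertex-decoration space equal to D). -/

import Mathlib

open TensorProduct

/-- The endomorphism `φ₁₃ = (τ ⊗ id) ∘ (id ⊗ φ) ∘ (τ ⊗ id)` of `D_E ⊗ D_E ⊗ D_V`,
where `τ` is the flip of the first two factors. -/
noncomputable def phi13 (K : Type*) [CommSemiring K] (E V : Type*)
    [AddCommMonoid E] [Module K E] [AddCommMonoid V] [Module K V]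
    (φ : TensorProduct K E V →ₗ[K] TensorProduct K E V) :
    TensorProduct K E (TensorProduct K E V) →ₗ[K] TensorProduct K E (TensorProduct K E V) :=
  (TensorProduct.leftComm K E E V).toLinearMap ∘ₗ LinearMap.lTensor E φ ∘ₗ
    (TensorProduct.leftComm K E E V).toLinearMap

/-- `φ` is tree-compatible if `φ₁₃ ∘ φ₂₃ = φ₂₃ ∘ φ₁₃`, where `φ₂₃ = id ⊗ φ`. -/
noncomputable def TreeCompatible (K : Type*) [CommSemiring K] (E V : Type*)
    [AddCommMonoid E] [Module K E] [AddCommMonoid V] [Module K V]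
    (φ : TensorProduct K E V →ₗ[K] TensorProduct K E V) : Prop :=
  phi13 K E V φ ∘ₗ LinearMap.lTensor E φ = LinearMap.lTensor E φ ∘ₗ phi13 K E V φ
lemma choose_swap {c l m : ℕ} (h : l + m ≤ c) :
    c.choose l * (c - l).choose m = c.choose m * (c - m).choose l := by
  have h1 := Nat.choose_mul (n := c) (k := l + m) (s := l) (Nat.le_add_right _ _)
  have h2 := Nat.choose_mul (n := c) (k := l + m) (s := m) (Nat.le_add_left _ _)
  simp only [Nat.add_sub_cancel_left, Nat.add_sub_cancel] at h1 h2
  have h3 : (l + m).choose l = (l + m).choose m := by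
    rw [← Nat.choose_symm (Nat.le_add_left m l), Nat.add_sub_cancel]
  rw [← h1, ← h2, h3]

/-- The map `φ^λ`, defined on basis vectors by
`φ^λ(a ⊗ b) = Σ_{l ≤ min(a,b)} λ^l · binom(b,l) · (a − l) ⊗ (b − l)`, is tree-compatible.
Here `D` is the free `K`-vector space on `ℕ^{d+1}` (a vector space with a basis `e`
indexed by `ℕ^{d+1}`). -/
theorem phi_lambda_treeCompatible (K : Type*) [Field K] [CharZero K] (d : ℕ)
    (D : Type*) [AddCommGroup D] [Module K D] (e : Module.Basis (Fin (d + 1) → ℕ) K D)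
    (lam : Fin (d + 1) → K)
    (φ : TensorProduct K D D →ₗ[K] TensorProduct K D D)
    (hφ : ∀ a b : Fin (d + 1) → ℕ,
      φ (e a ⊗ₜ e b) =
        ∑ l ∈ Finset.Iic (fun i => min (a i) (b i)),
          ((∏ i, lam i ^ l i) * ∏ i, ((b i).choose (l i) : K)) •
            (e (a - l) ⊗ₜ[K] e (b - l))) :
    TreeCompatible K D D φ := by
  have h13 : ∀ a b c : Fin (d + 1) → ℕ,
      phi13 K D D φ (e a ⊗ₜ[K] (e b ⊗ₜ[K] e c)) =
        ∑ l ∈ Finset.Iic (fun i => min (a i) (c i)),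
          ((∏ i, lam i ^ l i) * ∏ i, ((c i).choose (l i) : K)) •
            (e (a - l) ⊗ₜ[K] (e b ⊗ₜ[K] e (c - l))) := by
    intro a b c
    simp [phi13, hφ, TensorProduct.tmul_sum, TensorProduct.tmul_smul]
  apply (e.tensorProduct (e.tensorProduct e)).ext
  rintro ⟨a, b, c⟩
  simp only [Module.Basis.tensorProduct_apply, LinearMap.comp_apply, LinearMap.lTensor_tmul,
    LinearMap.id_apply, hφ, map_sum, map_smul, TensorProduct.tmul_sum, TensorProduct.tmul_smul,
    h13]
  simp only [Finset.smul_sum, smul_smul]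
  have hcond : ∀ l m : Fin (d + 1) → ℕ,
      (l ∈ Finset.Iic (fun i => a i ⊓ c i) ∧ m ∈ Finset.Iic (fun i => b i ⊓ (c - l) i)) ↔
      (l ∈ Finset.Iic (fun i => a i ⊓ (c - m) i) ∧ m ∈ Finset.Iic (fun i => b i ⊓ c i)) := by
    intro l m
    simp only [Finset.mem_Iic, Pi.le_def, le_inf_iff, Pi.sub_apply]
    constructor <;> rintro ⟨h1, h2⟩ <;>
      exact ⟨fun i => by have := h1 i; have := h2 i; omega,
             fun i => by have := h1 i; have := h2 i; omega⟩
  rw [← Finset.sum_comm' hcond]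
  refine Finset.sum_congr rfl fun l hl => Finset.sum_congr rfl fun m hm => ?_
  simp only [Finset.mem_Iic, Pi.le_def, le_inf_iff, Pi.sub_apply] at hl hm
  have hlm : ∀ i, l i + m i ≤ c i := fun i => by
    have := (hl i).2; have := (hm i).2; omega
  have hsub : c - m - l = c - l - m := by
    funext i; simp only [Pi.sub_apply]; omega
  have key : (∏ i, ((c i).choose (m i) : K)) * ∏ i, (((c - m) i).choose (l i) : K)
      = (∏ i, ((c i).choose (l i) : K)) * ∏ i, (((c - l) i).choose (m i) : K) := by
    rw [← Finset.prod_mul_distrib, ← Finset.prod_mul_distrib]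
    refine Finset.prod_congr rfl fun i _ => ?_
    have h := choose_swap (hlm i)
    simp only [Pi.sub_apply]
    exact_mod_cast congrArg (Nat.cast : ℕ → K) h.symm
  rw [hsub]
  congr 1
  linear_combination (∏ i, lam i ^ l i) * (∏ i, lam i ^ m i) * key
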